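/- Let α = 2 with δ(X) = 2|X| − |E(X)|, and f with f(1)=2, f(2)=3, f(3)=4, f(6) ≤ 6, increasing. Then the unique proper independence theorem diagram D for K_f with d₁₂ := max δ(D_{ij}) ≤ 4 is the 6-cycle: it has |D₀| = 0, each |Dᵢ| = 1 (i = 1,2,3), each D_{ij} a path of length 2 with the Dᵢ as endpoints, and δ(D) = 6 ≥ f(6), so f(|D|) ≤ δ(D). -/

import Mathlib

def edgeCount {V : Type*} [Fintype V] [DecidableEq V] (G : SimpleGraph V)
    [DecidableRel G.Adj] (s : Finset V) : ℕ :=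
  (G.edgeFinset ∩ s.sym2).card

noncomputable def pdim {V : Type*} [Fintype V] [DecidableEq V] (α : ℝ) (G : SimpleGraph V)
    [DecidableRel G.Adj] (s : Finset V) : ℝ :=
  α * s.card - edgeCount G s

def dClosedIn {V : Type*} [Fintype V] [DecidableEq V] (α : ℝ) (G : SimpleGraph V)
    [DecidableRel G.Adj] (A B : Finset V) : Prop :=
  A ⊆ B ∧ ∀ B' : Finset V, A ⊂ B' → B' ⊆ B → pdim α G A < pdim α G B'

def leqStar {V : Type*} [Fintype V] [DecidableEq V] (α : ℝ) (G : SimpleGraph V)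
    [DecidableRel G.Adj] (A B : Finset V) : Prop :=
  A ⊆ B ∧ ∀ B' : Finset V, A ⊆ B' → B' ⊆ B → pdim α G A ≤ pdim α G B'

def inKf {V : Type*} [Fintype V] [DecidableEq V] (f : ℝ → ℝ) (G : SimpleGraph V)
    [DecidableRel G.Adj] (A : Finset V) : Prop :=
  ∀ A' ⊆ A, A'.Nonempty → f A'.card ≤ pdim 2 G A'

lemma side_lemma {V : Type*} [Fintype V] [DecidableEq V] (G : SimpleGraph V)
    [DecidableRel G.Adj] {a b : V} (hab : a ≠ b) (hnadj : ¬ G.Adj a b)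
    {D : Finset V} (hsub : ({a, b} : Finset V) ⊆ D) (hcard : D.card = 3)
    (hpd : pdim 2 G ({a, b} : Finset V) = pdim 2 G D) :
    edgeCount G D = 2 ∧ (D.filter (G.Adj a)).card = 1 ∧ (D.filter (G.Adj b)).card = 1 := by
  have e0 : G.edgeFinset ∩ ({a, b} : Finset V).sym2 = ∅ := by
    ext e
    induction e using Sym2.inductionOn with
    | hf u v =>
      simp only [Finset.mem_inter, SimpleGraph.mem_edgeFinset, SimpleGraph.mem_edgeSet,
        Finset.mk_mem_sym2_iff, Finset.mem_insert, Finset.mem_singleton,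
        Finset.notMem_empty, iff_false, not_and]
      intro hadj h1 h2
      rcases h1 with rfl | rfl <;> rcases h2 with rfl | rfl <;>
        first
          | exact G.loopless.irrefl _ hadj
          | exact hnadj hadj
          | exact hnadj hadj.symm
  have e0c : edgeCount G ({a, b} : Finset V) = 0 := by
    simp [edgeCount, e0]
  have hpcard : ({a, b} : Finset V).card = 2 := Finset.card_pair hab
  have he2 : edgeCount G D = 2 := by
    simp only [pdim, hpcard, hcard, e0c] at hpd
    have : (edgeCount G D : ℝ) = 2 := by push_cast at hpd ⊢; linarith
    exact_mod_cast this
  -- get the third vertex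
  have hsd : (D \ {a, b}).card = 1 := by
    rw [Finset.card_sdiff_of_subset hsub, hcard, hpcard]
  obtain ⟨c, hc⟩ := Finset.card_eq_one.mp hsd
  have hcmem : c ∈ D \ ({a, b} : Finset V) := by rw [hc]; exact Finset.mem_singleton_self c
  rw [Finset.mem_sdiff, Finset.mem_insert, Finset.mem_singleton] at hcmem
  push_neg at hcmem
  obtain ⟨hcD, hca, hcb⟩ := hcmem
  have hD : D = {a, b, c} := by
    have := Finset.sdiff_union_of_subset hsub
    rw [hc] at this
    rw [← this]
    ext x
    simp only [Finset.mem_union, Finset.mem_singleton, Finset.mem_insert]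
    tauto
  -- the edge set of D is exactly {s(a,c), s(b,c)}
  have hEsub : G.edgeFinset ∩ D.sym2 ⊆ ({s(a, c), s(b, c)} : Finset (Sym2 V)) := by
    intro e he
    induction e using Sym2.inductionOn with
    | hf u v =>
      rw [Finset.mem_inter, SimpleGraph.mem_edgeFinset, SimpleGraph.mem_edgeSet,
        Finset.mk_mem_sym2_iff, hD] at he
      obtain ⟨hadj, hu, hv⟩ := he
      simp only [Finset.mem_insert, Finset.mem_singleton] at hu hv
      rcases hu with rfl | rfl | rfl <;> rcases hv with rfl | rfl | rfl <;>
        first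
          | exact absurd hadj (G.loopless.irrefl _)
          | exact absurd hadj hnadj
          | exact absurd hadj.symm hnadj
          | simp [Sym2.eq_iff]
  have hpairne : s(a, c) ≠ s(b, c) := by
    intro h
    rcases Sym2.eq_iff.mp h with ⟨h1, _⟩ | ⟨h1, _⟩
    · exact hab h1
    · exact hca h1.symm
  have hE : G.edgeFinset ∩ D.sym2 = ({s(a, c), s(b, c)} : Finset (Sym2 V)) := by
    refine Finset.eq_of_subset_of_card_le hEsub ?_
    rw [Finset.card_pair hpairne]
    exact he2.ge
  have hac : G.Adj a c := by
    have : s(a, c) ∈ G.edgeFinset ∩ D.sym2 := by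
      rw [hE]; exact Finset.mem_insert_self _ _
    rw [Finset.mem_inter, SimpleGraph.mem_edgeFinset, SimpleGraph.mem_edgeSet] at this
    exact this.1
  have hbc : G.Adj b c := by
    have : s(b, c) ∈ G.edgeFinset ∩ D.sym2 := by
      rw [hE]; exact Finset.mem_insert_of_mem (Finset.mem_singleton_self _)
    rw [Finset.mem_inter, SimpleGraph.mem_edgeFinset, SimpleGraph.mem_edgeSet] at this
    exact this.1
  refine ⟨he2, ?_, ?_⟩
  · have : D.filter (G.Adj a) = {c} := by
      rw [hD]
      ext x
      simp only [Finset.mem_filter, Finset.mem_insert, Finset.mem_singleton]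
      constructor
      · rintro ⟨rfl | rfl | rfl, hadj⟩
        · exact absurd hadj (G.loopless.irrefl _)
        · exact absurd hadj hnadj
        · rfl
      · rintro rfl; exact ⟨Or.inr (Or.inr rfl), hac⟩
    rw [this]; exact Finset.card_singleton c
  · have : D.filter (G.Adj b) = {c} := by
      rw [hD]
      ext x
      simp only [Finset.mem_filter, Finset.mem_insert, Finset.mem_singleton]
      constructor
      · rintro ⟨rfl | rfl | rfl, hadj⟩
        · exact absurd hadj.symm hnadj
        · exact absurd hadj (G.loopless.irrefl _)
        · rfl
      · rintro rfl; exact ⟨Or.inr (Or.inr rfl), hbc⟩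
    rw [this]; exact Finset.card_singleton c

lemma card_le_three_of_pdim_le {V : Type*} [Fintype V] [DecidableEq V] (G : SimpleGraph V)
    [DecidableRel G.Adj] {f : ℝ → ℝ}
    (hmono : ∀ ⦃s t : ℝ⦄, 0 < s → s < t → f s < f t) (hf3 : f 3 = 4)
    {A : Finset V} (hK : inKf f G A) (hne : A.Nonempty) (hd : pdim 2 G A ≤ 4) :
    A.card ≤ 3 := by
  by_contra h
  push_neg at h
  have h4 : (4 : ℝ) ≤ (A.card : ℝ) := by exact_mod_cast h
  have hKA := hK A (subset_refl A) hne
  have hlt : f 3 < f A.card := hmono (by norm_num) (by linarith)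
  rw [hf3] at hlt
  linarith

lemma edge_sets_disjoint {V : Type*} [Fintype V] [DecidableEq V] (G : SimpleGraph V)
    [DecidableRel G.Adj] {A B : Finset V} {x : V} (hx : A ∩ B = {x}) :
    Disjoint (G.edgeFinset ∩ A.sym2) (G.edgeFinset ∩ B.sym2) := by
  rw [Finset.disjoint_left]
  intro e heA heB
  induction e using Sym2.inductionOn with
  | hf u v =>
    simp only [Finset.mem_inter, Finset.mk_mem_sym2_iff, SimpleGraph.mem_edgeFinset,
      SimpleGraph.mem_edgeSet] at heA heB
    have hu : u ∈ A ∩ B := Finset.mem_inter.mpr ⟨heA.2.1, heB.2.1⟩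
    have hv : v ∈ A ∩ B := Finset.mem_inter.mpr ⟨heA.2.2, heB.2.2⟩
    rw [hx, Finset.mem_singleton] at hu hv
    subst hu; subst hv
    exact G.loopless.irrefl _ heA.1

/-- The unique proper independence theorem diagram for `K_f` with
`d₁₂ = max δ(D_{ij}) ≤ 4` is the `6`-cycle: `D₀ = ∅`, each `Dᵢ` is a single vertex,
each `D_{ij}` is a path of length `2` with the vertices of `Dᵢ`, `D_j` as endpoints,
and `δ(D) = 6 ≥ f(|D|)`. -/
theorem proper_ITD_is_hexagon {V : Type*} [Fintype V] [DecidableEq V] (G : SimpleGraph V)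
    [DecidableRel G.Adj] (f : ℝ → ℝ)
    (hmono : ∀ ⦃s t : ℝ⦄, 0 < s → s < t → f s < f t)
    (hf1 : f 1 = 2) (hf2 : f 2 = 3) (hf3 : f 3 = 4) (hf6 : f 6 ≤ 6)
    (D₀ D₁ D₂ D₃ D₁₂ D₁₃ D₂₃ : Finset V)
    -- the diagram is proper
    (hp1 : D₀ ⊂ D₁) (hp2 : D₀ ⊂ D₂) (hp3 : D₀ ⊂ D₃)
    -- all pieces are in K_f
    (hK1 : inKf f G D₁) (hK2 : inKf f G D₂) (hK3 : inKf f G D₃)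
    (hK12 : inKf f G D₁₂) (hK13 : inKf f G D₁₃) (hK23 : inKf f G D₂₃)
    -- intersection conditions
    (hi12 : D₁ ∩ D₂ = D₀) (hi13 : D₁ ∩ D₃ = D₀) (hi23 : D₂ ∩ D₃ = D₀)
    (hm12 : D₁₂ ∩ D₁₃ = D₁) (hm21 : D₁₂ ∩ D₂₃ = D₂) (hm31 : D₁₃ ∩ D₂₃ = D₃)
    -- `Dᵢ, D_j ≤ D_{ij}`
    (hd112 : dClosedIn 2 G D₁ D₁₂) (hd212 : dClosedIn 2 G D₂ D₁₂)
    (hd113 : dClosedIn 2 G D₁ D₁₃) (hd313 : dClosedIn 2 G D₃ D₁₃)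
    (hd223 : dClosedIn 2 G D₂ D₂₃) (hd323 : dClosedIn 2 G D₃ D₂₃)
    -- `Dᵢ` and `D_j` are freely amalgamated over `D₀` in `D_{ij}`
    (hf12 : ∀ u ∈ D₁ \ D₀, ∀ v ∈ D₂ \ D₀, ¬ G.Adj u v)
    (hf13 : ∀ u ∈ D₁ \ D₀, ∀ v ∈ D₃ \ D₀, ¬ G.Adj u v)
    (hf23 : ∀ u ∈ D₂ \ D₀, ∀ v ∈ D₃ \ D₀, ¬ G.Adj u v)
    -- `Dᵢ ∪ D_j ⊊ D_{ij}` is self-sufficient with the same predimension (eventual closure)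
    (hc12 : D₁ ∪ D₂ ⊂ D₁₂ ∧ leqStar 2 G (D₁ ∪ D₂) D₁₂ ∧
      pdim 2 G (D₁ ∪ D₂) = pdim 2 G D₁₂)
    (hc13 : D₁ ∪ D₃ ⊂ D₁₃ ∧ leqStar 2 G (D₁ ∪ D₃) D₁₃ ∧
      pdim 2 G (D₁ ∪ D₃) = pdim 2 G D₁₃)
    (hc23 : D₂ ∪ D₃ ⊂ D₂₃ ∧ leqStar 2 G (D₂ ∪ D₃) D₂₃ ∧
      pdim 2 G (D₂ ∪ D₃) = pdim 2 G D₂₃)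
    -- every edge of `D` lies within some `D_{ij}`
    (hedges : ∀ u ∈ D₁₂ ∪ D₁₃ ∪ D₂₃, ∀ v ∈ D₁₂ ∪ D₁₃ ∪ D₂₃, G.Adj u v →
      (({u, v} : Finset V) ⊆ D₁₂ ∨ ({u, v} : Finset V) ⊆ D₁₃ ∨
        ({u, v} : Finset V) ⊆ D₂₃))
    -- `d₁₂ = max δ(D_{ij}) ≤ 4`
    (hd12 : pdim 2 G D₁₂ ≤ 4) (hd13 : pdim 2 G D₁₃ ≤ 4) (hd23 : pdim 2 G D₂₃ ≤ 4) :
    D₀ = ∅ ∧ D₁.card = 1 ∧ D₂.card = 1 ∧ D₃.card = 1 ∧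
    (D₁₂.card = 3 ∧ edgeCount G D₁₂ = 2 ∧
      ∀ v ∈ D₁ ∪ D₂, (D₁₂.filter (G.Adj v)).card = 1) ∧
    (D₁₃.card = 3 ∧ edgeCount G D₁₃ = 2 ∧
      ∀ v ∈ D₁ ∪ D₃, (D₁₃.filter (G.Adj v)).card = 1) ∧
    (D₂₃.card = 3 ∧ edgeCount G D₂₃ = 2 ∧
      ∀ v ∈ D₂ ∪ D₃, (D₂₃.filter (G.Adj v)).card = 1) ∧
    pdim 2 G (D₁₂ ∪ D₁₃ ∪ D₂₃) = 6 ∧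
    f ((D₁₂ ∪ D₁₃ ∪ D₂₃).card) ≤ pdim 2 G (D₁₂ ∪ D₁₃ ∪ D₂₃) := by
  -- nonemptiness and size bounds
  have c01 : D₀.card < D₁.card := Finset.card_lt_card hp1
  have c02'' : D₀.card < D₂.card := Finset.card_lt_card hp2
  have hne1 : D₁.Nonempty := Finset.card_pos.mp (by omega)
  have h12le : D₁₂.card ≤ 3 :=
    card_le_three_of_pdim_le G hmono hf3 hK12 (hne1.mono hd112.1) hd12
  have h13le : D₁₃.card ≤ 3 :=
    card_le_three_of_pdim_le G hmono hf3 hK13 (hne1.mono hd113.1) hd13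
  have hne2 : D₂.Nonempty := Finset.card_pos.mp (by omega)
  have h23le : D₂₃.card ≤ 3 :=
    card_le_three_of_pdim_le G hmono hf3 hK23 (hne2.mono hd223.1) hd23
  -- cardinality arithmetic
  have c03 : D₀.card < D₃.card := Finset.card_lt_card hp3
  have u12 : (D₁ ∪ D₂).card + D₀.card = D₁.card + D₂.card := by
    rw [← hi12]; exact Finset.card_union_add_card_inter _ _
  have u13 : (D₁ ∪ D₃).card + D₀.card = D₁.card + D₃.card := by
    rw [← hi13]; exact Finset.card_union_add_card_inter _ _
  have u23 : (D₂ ∪ D₃).card + D₀.card = D₂.card + D₃.card := by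
    rw [← hi23]; exact Finset.card_union_add_card_inter _ _
  have l12 : (D₁ ∪ D₂).card < D₁₂.card := Finset.card_lt_card hc12.1
  have l13 : (D₁ ∪ D₃).card < D₁₃.card := Finset.card_lt_card hc13.1
  have l23 : (D₂ ∪ D₃).card < D₂₃.card := Finset.card_lt_card hc23.1
  have hD0c : D₀.card = 0 := by omega
  have hD1c : D₁.card = 1 := by omega
  have hD2c : D₂.card = 1 := by omega
  have hD3c : D₃.card = 1 := by omega
  have h12c : D₁₂.card = 3 := by omega
  have h13c : D₁₃.card = 3 := by omega
  have h23c : D₂₃.card = 3 := by omega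
  have hD0 : D₀ = ∅ := Finset.card_eq_zero.mp hD0c
  obtain ⟨a, ha⟩ := Finset.card_eq_one.mp hD1c
  obtain ⟨b, hb⟩ := Finset.card_eq_one.mp hD2c
  obtain ⟨d, hd⟩ := Finset.card_eq_one.mp hD3c
  subst hD0; subst ha; subst hb; subst hd
  -- distinctness of a, b, d
  have hab : a ≠ b := by
    rintro rfl
    have : a ∈ ({a} : Finset V) ∩ {a} := by simp
    rw [hi12] at this; simp at this
  have had : a ≠ d := by
    rintro rfl
    have : a ∈ ({a} : Finset V) ∩ {a} := by simp
    rw [hi13] at this; simp at this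
  have hbd : b ≠ d := by
    rintro rfl
    have : b ∈ ({b} : Finset V) ∩ {b} := by simp
    rw [hi23] at this; simp at this
  -- non-adjacency from free amalgamation
  have hnab : ¬ G.Adj a b := hf12 a (by simp) b (by simp)
  have hnad : ¬ G.Adj a d := hf13 a (by simp) d (by simp)
  have hnbd : ¬ G.Adj b d := hf23 b (by simp) d (by simp)
  -- unions are pairs
  have hU12 : ({a} : Finset V) ∪ {b} = ({a, b} : Finset V) := by ext x; simp
  have hU13 : ({a} : Finset V) ∪ {d} = ({a, d} : Finset V) := by ext x; simp
  have hU23 : ({b} : Finset V) ∪ {d} = ({b, d} : Finset V) := by ext x; simp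
  -- apply the side lemma to each D_ij
  obtain ⟨he12, hfa12, hfb12⟩ :=
    side_lemma G hab hnab (by rw [← hU12]; exact hc12.1.1) h12c (by rw [← hU12]; exact hc12.2.2)
  obtain ⟨he13, hfa13, hfd13⟩ :=
    side_lemma G had hnad (by rw [← hU13]; exact hc13.1.1) h13c (by rw [← hU13]; exact hc13.2.2)
  obtain ⟨he23, hfb23, hfd23⟩ :=
    side_lemma G hbd hnbd (by rw [← hU23]; exact hc23.1.1) h23c (by rw [← hU23]; exact hc23.2.2)
  -- cardinality of the union, by inclusion-exclusion
  have hcard1 : (D₁₂ ∪ D₁₃).card + ({a} : Finset V).card = D₁₂.card + D₁₃.card := by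
    rw [← hm12]; exact Finset.card_union_add_card_inter _ _
  rw [Finset.card_singleton] at hcard1
  have hinter : (D₁₂ ∪ D₁₃) ∩ D₂₃ = ({b} : Finset V) ∪ {d} := by
    rw [Finset.union_inter_distrib_right, hm21, hm31]
  have hcard2 : (D₁₂ ∪ D₁₃ ∪ D₂₃).card + ((D₁₂ ∪ D₁₃) ∩ D₂₃).card
      = (D₁₂ ∪ D₁₃).card + D₂₃.card := Finset.card_union_add_card_inter _ _
  have hbdcard : (({b} : Finset V) ∪ {d}).card = 2 := by
    rw [hU23]; exact Finset.card_pair hbd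
  have hDcard : (D₁₂ ∪ D₁₃ ∪ D₂₃).card = 6 := by
    rw [hinter, hbdcard] at hcard2
    omega
  -- the edge set of the union splits as a disjoint union
  have hEset : G.edgeFinset ∩ (D₁₂ ∪ D₁₃ ∪ D₂₃).sym2 =
      (G.edgeFinset ∩ D₁₂.sym2) ∪ (G.edgeFinset ∩ D₁₃.sym2) ∪ (G.edgeFinset ∩ D₂₃.sym2) := by
    apply Finset.Subset.antisymm
    · intro e he
      induction e using Sym2.inductionOn with
      | hf u v =>
        rw [Finset.mem_inter, Finset.mk_mem_sym2_iff] at he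
        obtain ⟨hee, hu, hv⟩ := he
        have hadj : G.Adj u v := by
          rwa [SimpleGraph.mem_edgeFinset, SimpleGraph.mem_edgeSet] at hee
        rcases hedges u hu v hv hadj with h | h | h
        · exact Finset.mem_union_left _ (Finset.mem_union_left _ (Finset.mem_inter.mpr
            ⟨hee, Finset.mk_mem_sym2_iff.mpr ⟨h (by simp), h (by simp)⟩⟩))
        · exact Finset.mem_union_left _ (Finset.mem_union_right _ (Finset.mem_inter.mpr
            ⟨hee, Finset.mk_mem_sym2_iff.mpr ⟨h (by simp), h (by simp)⟩⟩))
        · exact Finset.mem_union_right _ (Finset.mem_inter.mpr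
            ⟨hee, Finset.mk_mem_sym2_iff.mpr ⟨h (by simp), h (by simp)⟩⟩)
    · have m12 : D₁₂ ⊆ D₁₂ ∪ D₁₃ ∪ D₂₃ := by intro x hx; simp [hx]
      have m13 : D₁₃ ⊆ D₁₂ ∪ D₁₃ ∪ D₂₃ := by intro x hx; simp [hx]
      have m23 : D₂₃ ⊆ D₁₂ ∪ D₁₃ ∪ D₂₃ := by intro x hx; simp [hx]
      refine Finset.union_subset (Finset.union_subset ?_ ?_) ?_ <;>
        exact Finset.inter_subset_inter (subset_refl _) (Finset.sym2_mono (by assumption))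
  have hdisj1 : Disjoint (G.edgeFinset ∩ D₁₂.sym2) (G.edgeFinset ∩ D₁₃.sym2) :=
    edge_sets_disjoint G hm12
  have hdisj2 : Disjoint (G.edgeFinset ∩ D₁₂.sym2 ∪ G.edgeFinset ∩ D₁₃.sym2)
      (G.edgeFinset ∩ D₂₃.sym2) :=
    Finset.disjoint_union_left.mpr ⟨edge_sets_disjoint G hm21, edge_sets_disjoint G hm31⟩
  have hEcard : edgeCount G (D₁₂ ∪ D₁₃ ∪ D₂₃) = 6 := by
    show (G.edgeFinset ∩ (D₁₂ ∪ D₁₃ ∪ D₂₃).sym2).card = 6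
    rw [hEset, Finset.card_union_of_disjoint hdisj2, Finset.card_union_of_disjoint hdisj1]
    show edgeCount G D₁₂ + edgeCount G D₁₃ + edgeCount G D₂₃ = 6
    rw [he12, he13, he23]
  have hpD : pdim 2 G (D₁₂ ∪ D₁₃ ∪ D₂₃) = 6 := by
    show (2:ℝ) * ((D₁₂ ∪ D₁₃ ∪ D₂₃).card : ℝ) - (edgeCount G (D₁₂ ∪ D₁₃ ∪ D₂₃) : ℝ) = 6
    rw [hDcard, hEcard]
    norm_num
  refine ⟨rfl, by simp, by simp, by simp,
    ⟨h12c, he12, ?_⟩, ⟨h13c, he13, ?_⟩, ⟨h23c, he23, ?_⟩, hpD, ?_⟩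
  · intro v hv
    rw [hU12, Finset.mem_insert, Finset.mem_singleton] at hv
    rcases hv with rfl | rfl
    · exact hfa12
    · exact hfb12
  · intro v hv
    rw [hU13, Finset.mem_insert, Finset.mem_singleton] at hv
    rcases hv with rfl | rfl
    · exact hfa13
    · exact hfd13
  · intro v hv
    rw [hU23, Finset.mem_insert, Finset.mem_singleton] at hv
    rcases hv with rfl | rfl
    · exact hfb23
    · exact hfd23
  · rw [hpD, hDcard]
    norm_num
    exact hf6
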